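/- Let V be a Weibull random variable with scale c > 0 and shape k > 0, let a > 0, and let 0 < V_ci < V_r. Then for all p₁, p₂ with a·V_ci³ < p₁ < p₂ ≤ a·V_r³, the probability P(p₁ < a·V³ ≤ p₂ and V_ci < V ≤ V_r) equals ∫_{p₁}^{p₂} (k/(3·c^k·a^{k/3}))·p^{k/3 − 1}·exp(−p^{k/3}/(a^{k/3}·c^k)) dp. (Continuous part of the distribution of the harvested wind power, Theorem 2.) -/

import Mathlib

open MeasureTheory Real

/-- Weibull density with scale `c > 0` and shape `k > 0` (zero for `v ≤ 0`). -/
noncomputable def weibullDensity (c k v : ℝ) : ℝ :=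
  if 0 < v then (k / c) * (v / c) ^ (k - 1) * Real.exp (-(v / c) ^ k) else 0

/-- **Theorem 2 (continuous part of the distribution of the harvested wind power).**
If `V` is Weibull with scale `c` and shape `k`, then for all
`a·V_ci³ < p₁ < p₂ ≤ a·V_r³`, the probability
`P(p₁ < a·V³ ≤ p₂ ∧ V_ci < V ≤ V_r)` equals
`∫_{p₁}^{p₂} (k/(3·c^k·a^{k/3}))·p^{k/3−1}·exp(−p^{k/3}/(a^{k/3}·c^k)) dp`. -/
theorem wind_power_density
    {Ω : Type*} [MeasurableSpace Ω] (μ : Measure Ω) [IsProbabilityMeasure μ]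
    (c k a Vci Vr : ℝ) (hc : 0 < c) (hk : 0 < k) (ha : 0 < a)
    (hVci : 0 < Vci) (hVr : Vci < Vr)
    (V : Ω → ℝ) (hV : Measurable V)
    (hlaw : μ.map V = volume.withDensity fun v => ENNReal.ofReal (weibullDensity c k v)) :
    ∀ p₁ p₂ : ℝ, a * Vci ^ 3 < p₁ → p₁ < p₂ → p₂ ≤ a * Vr ^ 3 →
      (μ {ω | p₁ < a * V ω ^ 3 ∧ a * V ω ^ 3 ≤ p₂ ∧ Vci < V ω ∧ V ω ≤ Vr}).toReal =
        ∫ p in p₁..p₂,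
          (k / (3 * c ^ k * a ^ (k / 3))) * p ^ (k / 3 - 1)
            * Real.exp (-p ^ (k / 3) / (a ^ (k / 3) * c ^ k)) := by
  intro p₁ p₂ hap₁ hp₁₂ hp₂r
  have hp₁ : 0 < p₁ := lt_trans (by positivity) hap₁
  have hp₂ : 0 < p₂ := hp₁.trans hp₁₂
  set v₁ : ℝ := (p₁ / a) ^ ((1 : ℝ) / 3) with hv₁def
  set v₂ : ℝ := (p₂ / a) ^ ((1 : ℝ) / 3) with hv₂def
  have hv₁pos : 0 < v₁ := Real.rpow_pos_of_pos (div_pos hp₁ ha) _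
  have hv₂pos : 0 < v₂ := Real.rpow_pos_of_pos (div_pos hp₂ ha) _
  have cube : ∀ p : ℝ, 0 < p → ((p / a) ^ ((1:ℝ)/3)) ^ (3:ℕ) = p / a := by
    intro p hp
    rw [← Real.rpow_natCast ((p/a) ^ ((1:ℝ)/3)) 3, ← Real.rpow_mul (div_pos hp ha).le]
    norm_num
  have hv₁cube : v₁ ^ (3:ℕ) = p₁ / a := cube p₁ hp₁
  have hv₂cube : v₂ ^ (3:ℕ) = p₂ / a := cube p₂ hp₂
  -- basic order facts
  have hVciv₁ : Vci < v₁ := by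
    rw [← pow_lt_pow_iff_left₀ hVci.le hv₁pos.le (three_ne_zero), hv₁cube,
      lt_div_iff₀ ha]
    linarith [hap₁]
  have hv₂Vr : v₂ ≤ Vr := by
    rw [← pow_le_pow_iff_left₀ hv₂pos.le (hVci.trans hVr).le (three_ne_zero), hv₂cube,
      div_le_iff₀ ha]
    linarith [hp₂r]
  have hv₁₂ : v₁ < v₂ := by
    rw [← pow_lt_pow_iff_left₀ hv₁pos.le hv₂pos.le (three_ne_zero), hv₁cube, hv₂cube]
    exact div_lt_div_of_pos_right hp₁₂ ha
  -- set equality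
  have hset : {ω | p₁ < a * V ω ^ 3 ∧ a * V ω ^ 3 ≤ p₂ ∧ Vci < V ω ∧ V ω ≤ Vr}
      = V ⁻¹' Set.Ioc v₁ v₂ := by
    ext ω
    simp only [Set.mem_setOf_eq, Set.mem_preimage, Set.mem_Ioc]
    constructor
    · rintro ⟨h1, h2, h3, h4⟩
      have hx : 0 < V ω := hVci.trans h3
      constructor
      · rw [← pow_lt_pow_iff_left₀ hv₁pos.le hx.le (three_ne_zero), hv₁cube,
          div_lt_iff₀ ha]
        linarith
      · rw [← pow_le_pow_iff_left₀ hx.le hv₂pos.le (three_ne_zero), hv₂cube,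
          le_div_iff₀ ha]
        linarith
    · rintro ⟨h1, h2⟩
      have hx : 0 < V ω := hv₁pos.trans h1
      have h1' : v₁ ^ (3:ℕ) < V ω ^ (3:ℕ) :=
        (pow_lt_pow_iff_left₀ hv₁pos.le hx.le (three_ne_zero)).2 h1
      have h2' : V ω ^ (3:ℕ) ≤ v₂ ^ (3:ℕ) :=
        (pow_le_pow_iff_left₀ hx.le hv₂pos.le (three_ne_zero)).2 h2
      rw [hv₁cube] at h1'
      rw [hv₂cube] at h2'
      rw [div_lt_iff₀ ha] at h1'
      rw [le_div_iff₀ ha] at h2'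
      exact ⟨by linarith, by linarith, hVciv₁.trans h1, h2.trans hv₂Vr⟩
  -- measurability & nonneg of the density
  have hmeas : Measurable (weibullDensity c k) := by
    unfold weibullDensity
    refine Measurable.ite measurableSet_Ioi ?_ measurable_const
    measurability
  have hnn : ∀ v, 0 ≤ weibullDensity c k v := by
    intro v
    unfold weibullDensity
    split
    · next h => positivity
    · exact le_rfl
  -- reduce LHS to an interval integral
  rw [hset, ← Measure.map_apply hV measurableSet_Ioc, hlaw,
    withDensity_apply _ measurableSet_Ioc]
  have hLHS : (∫⁻ v in Set.Ioc v₁ v₂, ENNReal.ofReal (weibullDensity c k v)).toReal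
      = ∫ v in v₁..v₂, weibullDensity c k v := by
    rw [intervalIntegral.integral_of_le hv₁₂.le,
      integral_eq_lintegral_of_nonneg_ae (Filter.Eventually.of_forall fun v => hnn v)
        (hmeas.aestronglyMeasurable)]
  rw [hLHS]
  -- compute LHS interval integral via FTC
  have hDk : a ^ (k/3) * c ^ k ≠ 0 := by positivity
  have hL : ∫ v in v₁..v₂, weibullDensity c k v
      = Real.exp (-(v₁ / c) ^ k) - Real.exp (-(v₂ / c) ^ k) := by
    have hcongr : Set.EqOn (weibullDensity c k)
        (fun v => (k / c) * (v / c) ^ (k - 1) * Real.exp (-(v / c) ^ k))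
        (Set.uIcc v₁ v₂) := by
      intro x hx
      rw [Set.uIcc_of_le hv₁₂.le] at hx
      have : 0 < x := lt_of_lt_of_le hv₁pos hx.1
      unfold weibullDensity
      rw [if_pos this]
    rw [intervalIntegral.integral_congr hcongr]
    have hderiv : ∀ x ∈ Set.uIcc v₁ v₂,
        HasDerivAt (fun v => -Real.exp (-(v / c) ^ k))
          ((k / c) * (x / c) ^ (k - 1) * Real.exp (-(x / c) ^ k)) x := by
      intro x hx
      rw [Set.uIcc_of_le hv₁₂.le] at hx
      have hxpos : 0 < x := lt_of_lt_of_le hv₁pos hx.1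
      have h0 : HasDerivAt (fun v : ℝ => v / c) (1 / c) x := (hasDerivAt_id x).div_const c
      have h1 : HasDerivAt (fun y : ℝ => y ^ k) (k * (x / c) ^ (k - 1)) (x / c) :=
        Real.hasDerivAt_rpow_const (Or.inl (by positivity))
      have h2 := (h1.comp x h0).neg.exp.neg
      refine h2.congr_deriv ?_
      simp only [Function.comp_def, Pi.neg_apply]
      ring
    have hcont : ContinuousOn
        (fun v => (k / c) * (v / c) ^ (k - 1) * Real.exp (-(v / c) ^ k))
        (Set.uIcc v₁ v₂) := by
      intro x hx
      rw [Set.uIcc_of_le hv₁₂.le] at hx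
      have hxpos : 0 < x := lt_of_lt_of_le hv₁pos hx.1
      apply ContinuousAt.continuousWithinAt
      have hdiv : ContinuousAt (fun v : ℝ => v / c) x := continuousAt_id.div_const c
      have h1 : ContinuousAt (fun v : ℝ => (v / c) ^ (k - 1)) x :=
        (Real.continuousAt_rpow_const _ _ (Or.inl (by positivity))).comp hdiv
      have h2 : ContinuousAt (fun v : ℝ => (v / c) ^ k) x :=
        (Real.continuousAt_rpow_const _ _ (Or.inl (by positivity))).comp hdiv
      exact (continuousAt_const.mul h1).mul (Real.continuous_exp.continuousAt.comp h2.neg)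
    rw [intervalIntegral.integral_eq_sub_of_hasDerivAt hderiv
      (hcont.intervalIntegrable)]
    ring
  rw [hL]
  -- compute RHS interval integral via FTC
  have hR : ∫ p in p₁..p₂,
      (k / (3 * c ^ k * a ^ (k / 3))) * p ^ (k / 3 - 1)
        * Real.exp (-p ^ (k / 3) / (a ^ (k / 3) * c ^ k))
      = Real.exp (-(p₁ ^ (k/3) / (a ^ (k/3) * c ^ k)))
        - Real.exp (-(p₂ ^ (k/3) / (a ^ (k/3) * c ^ k))) := by
    simp only [neg_div]
    have hderiv : ∀ x ∈ Set.uIcc p₁ p₂,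
        HasDerivAt (fun p => -Real.exp (-(p ^ (k/3) / (a ^ (k/3) * c ^ k))))
          ((k / (3 * c ^ k * a ^ (k / 3))) * x ^ (k / 3 - 1)
            * Real.exp (-(x ^ (k / 3) / (a ^ (k / 3) * c ^ k)))) x := by
      intro x hx
      rw [Set.uIcc_of_le hp₁₂.le] at hx
      have hxpos : 0 < x := lt_of_lt_of_le hp₁ hx.1
      have h1 : HasDerivAt (fun p : ℝ => p ^ (k/3)) ((k/3) * x ^ (k/3 - 1)) x :=
        Real.hasDerivAt_rpow_const (Or.inl hxpos.ne')
      have h2 := ((h1.div_const (a ^ (k/3) * c ^ k)).neg.exp).neg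
      refine h2.congr_deriv ?_
      simp only [Pi.neg_apply]
      field_simp
    have hcont : ContinuousOn
        (fun p => (k / (3 * c ^ k * a ^ (k / 3))) * p ^ (k / 3 - 1)
          * Real.exp (-(p ^ (k / 3) / (a ^ (k / 3) * c ^ k)))) (Set.uIcc p₁ p₂) := by
      intro x hx
      rw [Set.uIcc_of_le hp₁₂.le] at hx
      have hxpos : 0 < x := lt_of_lt_of_le hp₁ hx.1
      apply ContinuousAt.continuousWithinAt
      have h1 : ContinuousAt (fun p : ℝ => p ^ (k/3 - 1)) x :=
        Real.continuousAt_rpow_const _ _ (Or.inl hxpos.ne')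
      have h2 : ContinuousAt (fun p : ℝ => p ^ (k/3)) x :=
        Real.continuousAt_rpow_const _ _ (Or.inl hxpos.ne')
      exact (continuousAt_const.mul h1).mul
        (Real.continuous_exp.continuousAt.comp (h2.div_const _).neg)
    rw [intervalIntegral.integral_eq_sub_of_hasDerivAt hderiv
      (hcont.intervalIntegrable)]
    ring
  rw [hR]
  -- match the two closed forms
  have hexp : ∀ p : ℝ, 0 < p →
      (((p / a) ^ ((1:ℝ)/3)) / c) ^ k = p ^ (k/3) / (a ^ (k/3) * c ^ k) := by
    intro p hp
    rw [Real.div_rpow (Real.rpow_nonneg (div_pos hp ha).le _) hc.le,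
      ← Real.rpow_mul (div_pos hp ha).le, show (1:ℝ)/3 * k = k/3 by ring,
      Real.div_rpow hp.le ha.le, div_div]
  rw [hexp p₁ hp₁, hexp p₂ hp₂]
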